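/- arXiv:1912.01434 — 2 statements merged into one kernel-verified Lean document; each statement's English description precedes it below -/
import Mathlib

section
/- Let n ≥ 3 and let p, q be integers with 2 ≤ p < q ≤ n. Let i_p, i_q be integers with 1 ≤ i_p < p and 1 ≤ i_q < q, and suppose q - i_q ≥ p. Then in S_n the following exchange law holds: t_q^{i_q} · t_p^{i_p} = t_{i_q+i_p}^{i_q} · t_{p+i_q}^{i_p} · t_q^{i_q}. -/
/- We work in the symmetric group on `Fin n` (representing `{1, ..., n}` via `i ↦ i - 1`).
The paper multiplies permutations left-to-right: `(π₁ · π₂)(i) = π₂(π₁(i))`,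
while Mathlib's `*` on `Equiv.Perm` is function composition: `(π₁ * π₂)(i) = π₁(π₂(i))`.
Hence a paper product `A · B · C` is rendered below as `C * B * A`. -/

/-- `sP n i` is the transposition `sᵢ = (i, i+1)` (1-indexed), for `1 ≤ i ≤ n - 1`. -/
def sP (n i : ℕ) : Equiv.Perm (Fin n) :=
  if h : 1 ≤ i ∧ i < n then
    Equiv.swap ⟨i - 1, lt_of_le_of_lt (Nat.sub_le i 1) h.2⟩ ⟨i, h.2⟩
  else 1

/-- `tP n m` is `t_m = s₁ · s₂ ⋯ s_{m-1}` (paper's left-to-right product, so here the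
factor for larger index is multiplied on the left).  `tP n 0 = tP n 1 = 1`. -/
def tP (n m : ℕ) : Equiv.Perm (Fin n) :=
  (List.range (m - 1)).foldl (fun g j => sP n (j + 1) * g) 1

/-- `uP n r` is `u_{2r} = t_{2r-2} · s_{2r-1}` (paper order; here reversed). -/
def uP (n r : ℕ) : Equiv.Perm (Fin n) := sP n (2 * r - 1) * tP n (2 * r - 2)

/-- `vP n r` is `v_{2r} = t_{2r}²`. -/
def vP (n r : ℕ) : Equiv.Perm (Fin n) := (tP n (2 * r)) ^ 2


lemma tP_succ_succ (n m : ℕ) : tP n (m + 2) = sP n (m + 1) * tP n (m + 1) := by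
  simp [tP, List.range_succ, List.foldl_append]

lemma sP_apply (n i : ℕ) (h1 : 1 ≤ i) (h2 : i < n) (x : Fin n) :
    ((sP n i) x : ℕ) = if (x:ℕ) = i - 1 then i else if (x:ℕ) = i then i - 1 else x := by
  rw [sP, dif_pos ⟨h1, h2⟩, Equiv.swap_apply_def]
  simp only [Fin.ext_iff, Fin.val_mk, apply_ite (Fin.val)]

lemma tP_apply (n : ℕ) : ∀ (m : ℕ), m ≤ n → ∀ (x : Fin n),
    ((tP n m) x : ℕ) = if (x:ℕ) = 0 ∧ 1 ≤ m then m - 1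
      else if (x:ℕ) < m then (x:ℕ) - 1 else x
  | 0, _, x => by simp [tP]
  | 1, _, x => by
      have hx := x.isLt
      have h1 : tP n 1 = 1 := rfl
      rw [h1, Equiv.Perm.one_apply]
      split_ifs <;> omega
  | (m+2), hm, x => by
      rw [tP_succ_succ, Equiv.Perm.mul_apply]
      have hy := tP_apply n (m+1) (by omega) x
      rw [sP_apply n (m+1) (by omega) (by omega), hy]
      have hx := x.isLt
      split_ifs <;> omega

lemma tP_pow_apply (n m : ℕ) (hm : m ≤ n) : ∀ (k : ℕ), k ≤ m → ∀ (x : Fin n),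
    ((tP n m ^ k) x : ℕ) = if (x:ℕ) < k then (x:ℕ) + m - k
      else if (x:ℕ) < m then (x:ℕ) - k else x
  | 0, _, x => by
      have hx := x.isLt
      simp only [pow_zero, Equiv.Perm.one_apply]
      split_ifs <;> omega
  | (k+1), hk, x => by
      rw [pow_succ', Equiv.Perm.mul_apply]
      have hy := tP_pow_apply n m hm k (by omega) x
      rw [tP_apply n m hm, hy]
      have hx := x.isLt
      split_ifs <;> omega

set_option maxHeartbeats 2000000 in

/-- exchange law, case `q - i_q ≥ p`:
`t_q^{i_q} · t_p^{i_p} = t_{i_q+i_p}^{i_q} · t_{p+i_q}^{i_p} · t_q^{i_q}` (paper order;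
rendered here in composition order, i.e. reversed). -/
theorem exchange_law_case1 (n p q ip iq : ℕ) (hn : 3 ≤ n)
    (hp : 2 ≤ p) (hpq : p < q) (hq : q ≤ n)
    (hip1 : 1 ≤ ip) (hip2 : ip < p) (hiq1 : 1 ≤ iq) (hiq2 : iq < q)
    (h : p ≤ q - iq) :
    tP n p ^ ip * tP n q ^ iq =
      tP n q ^ iq * tP n (p + iq) ^ ip * tP n (iq + ip) ^ iq := by
  ext x
  have hx := x.isLt
  simp only [Equiv.Perm.mul_apply]
  have e2 := tP_pow_apply n p (by omega) ip (by omega) ((tP n q ^ iq) x)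
  have e1 := tP_pow_apply n q hq iq (by omega) x
  have e5 := tP_pow_apply n q hq iq (by omega)
      ((tP n (p + iq) ^ ip) ((tP n (iq + ip) ^ iq) x))
  have e4 := tP_pow_apply n (p + iq) (by omega) ip (by omega) ((tP n (iq + ip) ^ iq) x)
  have e3 := tP_pow_apply n (iq + ip) (by omega) iq (by omega) x
  rw [e2, e1, e5, e4, e3]
  split_ifs <;> omega
end

section
/- Let n ≥ 4 and let p, q be integers with 2 ≤ p < q and 2q ≤ n. Let k_{2p}, k_{2q} be integers with 1 ≤ k_{2p} < p and 1 ≤ k_{2q} < q, and suppose q - k_{2q} ≥ p. Then in S_n the following exchange law holds: v_{2q}^{k_{2q}} · v_{2p}^{k_{2p}} = v_{2k_{2q}+2k_{2p}}^{k_{2q}} · v_{2p+2k_{2q}}^{k_{2p}} · v_{2q}^{k_{2q}}. -/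
lemma sP_apply_val (n i : ℕ) (h1 : 1 ≤ i) (h2 : i < n) (x : Fin n) :
    ((sP n i) x).val = if x.val = i - 1 then i else if x.val = i then i - 1 else x.val := by
  unfold sP
  rw [dif_pos ⟨h1, h2⟩, Equiv.swap_apply_def]
  split_ifs <;> simp only [Fin.ext_iff] at * <;> omega

lemma tP_succ (n m : ℕ) (hm : 1 ≤ m) : tP n (m + 1) = sP n m * tP n m := by
  unfold tP
  rw [show m + 1 - 1 = (m - 1) + 1 by omega, List.range_succ, List.foldl_append]
  simp only [List.foldl_cons, List.foldl_nil]
  congr 2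
  omega

lemma tP_apply_val (n m : ℕ) (hm : m ≤ n) (x : Fin n) :
    ((tP n m) x).val = if x.val < m then (if x.val = 0 then m - 1 else x.val - 1) else x.val := by
  induction m with
  | zero =>
    simp only [tP, Nat.zero_sub, List.range_zero, List.foldl_nil, Equiv.Perm.one_apply]
    split_ifs <;> omega
  | succ m ih =>
    rcases Nat.eq_zero_or_pos m with rfl | hm1
    · simp only [tP, Nat.sub_self, List.range_zero, List.foldl_nil, Equiv.Perm.one_apply]
      have hx := x.isLt
      split_ifs <;> omega
    · rw [tP_succ n m hm1, Equiv.Perm.mul_apply,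
        sP_apply_val n m hm1 (by omega), ih (by omega)]
      have hx := x.isLt
      split_ifs <;> omega

lemma tP_pow_apply_val (n m k : ℕ) (hk : k ≤ m) (hm : m ≤ n) (x : Fin n) :
    ((tP n m ^ k) x).val =
      if x.val < m then (if x.val < k then x.val + m - k else x.val - k) else x.val := by
  induction k with
  | zero => simp
  | succ k ih =>
    rw [pow_succ', Equiv.Perm.mul_apply, tP_apply_val n m hm, ih (by omega)]
    have hx := x.isLt
    split_ifs <;> omega

set_option maxHeartbeats 2000000 in
/-- exchange law for the `v`'s, case `q - k_{2q} ≥ p`: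
`v_{2q}^{k_{2q}} · v_{2p}^{k_{2p}} = v_{2k_{2q}+2k_{2p}}^{k_{2q}} · v_{2p+2k_{2q}}^{k_{2p}} · v_{2q}^{k_{2q}}`
(paper order; rendered here in composition order, i.e. reversed).  Here `vP n m = v_{2m}`. -/
theorem v_exchange_case1 (n p q kp kq : ℕ) (hn : 4 ≤ n)
    (hp : 2 ≤ p) (hpq : p < q) (hq : 2 * q ≤ n)
    (hkp1 : 1 ≤ kp) (hkp2 : kp < p) (hkq1 : 1 ≤ kq) (hkq2 : kq < q)
    (h : p ≤ q - kq) :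
    vP n p ^ kp * vP n q ^ kq =
      vP n q ^ kq * vP n (p + kq) ^ kp * vP n (kq + kp) ^ kq := by
  simp only [vP, ← pow_mul]
  ext x
  simp only [Equiv.Perm.mul_apply]
  rw [tP_pow_apply_val n (2*p) (2*kp) (by omega) (by omega),
      tP_pow_apply_val n (2*q) (2*kq) (by omega) (by omega),
      tP_pow_apply_val n (2*q) (2*kq) (by omega) (by omega),
      tP_pow_apply_val n (2*(p+kq)) (2*kp) (by omega) (by omega),
      tP_pow_apply_val n (2*(kq+kp)) (2*kq) (by omega) (by omega)]
  have hx := x.isLt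
  split_ifs <;> omega
end
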